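/- Let (C, ◇, Tr) be a guarded traced category. Define †_Tr by f^{†_Tr} = Tr^X_{A,X}(⟨f, f⟩) for f : ◇X × A → X. Then (C, ◇, †_Tr) is a guarded Conway category (†_Tr satisfies the fixpoint, parameter, composition and double dagger identities), and moreover the trace is recovered: for every f : ◇X × A → X × B, π_r ∘ f ∘ (p_X × id_A) ∘ ⟨(π_ℓ ∘ f)^{†_Tr}, id_A⟩ = Tr^X_{A,B}(f). -/

import Mathlib

open CategoryTheory CategoryTheory.Limits

universe v u

/-- A guarded Conway category structure: a guarded fixpoint operator `dag` satisfying the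
fixpoint, parameter, (simplified) composition and double dagger identities. -/
structure IsGuardedConway {C : Type u} [Category.{v} C] [HasFiniteProducts C]
    (D : C ⥤ C) (p : 𝟭 C ⟶ D)
    (dag : ∀ {X Y : C}, (D.obj X ⨯ Y ⟶ X) → (Y ⟶ X)) : Prop where
  fix : ∀ {X Y : C} (f : D.obj X ⨯ Y ⟶ X),
      dag f = prod.lift (dag f) (𝟙 Y) ≫ prod.map (p.app X) (𝟙 Y) ≫ f
  param : ∀ {X Y Z : C} (f : D.obj X ⨯ Y ⟶ X) (h : Z ⟶ Y),
      dag (prod.map (𝟙 (D.obj X)) h ≫ f) = h ≫ dag f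
  comp : ∀ {X Y Z : C} (f : D.obj X ⨯ Y ⟶ Z) (g : Z ⟶ X),
      dag (f ≫ g) = dag (prod.map (D.map g) (𝟙 Y) ≫ f) ≫ g
  ddag : ∀ {X Y : C} (f : D.obj X ⨯ (D.obj X ⨯ Y) ⟶ X),
      dag (dag f) = dag (prod.lift prod.fst (𝟙 (D.obj X ⨯ Y)) ≫ f)

/-- A guarded trace operator: a family `Tr : Hom(◇X × A, X × B) → Hom(A, B)` satisfying
left/right tightening, sliding (together: naturality), vanishing (V1), (V2),
superposing (S) and yanking (Y). -/
structure IsGuardedTrace {C : Type u} [Category.{v} C] [HasFiniteProducts C]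
    (D : C ⥤ C) (p : 𝟭 C ⟶ D)
    (Tr : ∀ {X A B : C}, (D.obj X ⨯ A ⟶ X ⨯ B) → (A ⟶ B)) : Prop where
  left_tightening : ∀ {X A A' B : C} (f : D.obj X ⨯ A ⟶ X ⨯ B) (g : A' ⟶ A),
      Tr (prod.map (𝟙 (D.obj X)) g ≫ f) = g ≫ Tr f
  right_tightening : ∀ {X A B B' : C} (f : D.obj X ⨯ A ⟶ X ⨯ B) (g : B ⟶ B'),
      Tr (f ≫ prod.map (𝟙 X) g) = Tr f ≫ g
  sliding : ∀ {X X' A B : C} (f : D.obj X ⨯ A ⟶ X' ⨯ B) (g : X' ⟶ X),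
      Tr (f ≫ prod.map g (𝟙 B)) = Tr (prod.map (D.map g) (𝟙 A) ≫ f)
  vanishing₁ : ∀ {A B : C} (f : D.obj (⊤_ C) ⨯ A ⟶ (⊤_ C) ⨯ B),
      Tr f = prod.lift (terminal.from A ≫ p.app (⊤_ C)) (𝟙 A) ≫ f ≫ prod.snd
  vanishing₂ : ∀ {X Y A B : C} (f : D.obj X ⨯ (D.obj Y ⨯ A) ⟶ X ⨯ (Y ⨯ B)),
      Tr (Tr f) =
      Tr (prod.lift (prod.fst ≫ D.map prod.fst)
            (prod.lift (prod.fst ≫ D.map prod.snd) prod.snd) ≫ f ≫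
          prod.lift (prod.lift prod.fst (prod.snd ≫ prod.fst)) (prod.snd ≫ prod.snd))
  superposing : ∀ {X A B E : C} (f : D.obj X ⨯ A ⟶ X ⨯ B),
      Tr (prod.lift
            (prod.lift prod.fst (prod.snd ≫ prod.fst) ≫ f ≫ prod.fst)
            (prod.lift (prod.lift prod.fst (prod.snd ≫ prod.fst) ≫ f ≫ prod.snd)
              ((prod.snd : D.obj X ⨯ (A ⨯ E) ⟶ A ⨯ E) ≫ prod.snd))) =
        prod.map (Tr f) (𝟙 E)
  yanking : ∀ X : C,
      Tr (prod.lift prod.snd prod.fst : D.obj X ⨯ X ⟶ X ⨯ D.obj X) = p.app X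


section Aux
variable {C : Type u} [Category.{v} C] [HasFiniteProducts C]
  {D : C ⥤ C} {p : 𝟭 C ⟶ D}
  {Tr : ∀ {X A B : C}, (D.obj X ⨯ A ⟶ X ⨯ B) → (A ⟶ B)}

attribute [local simp] prod.lift_fst prod.lift_snd prod.lift_fst_assoc prod.lift_snd_assoc

lemma trY (hTr : IsGuardedTrace D p @Tr) {A B : C} (c : D.obj A ⨯ A ⟶ B) :
    Tr (prod.lift prod.snd c) = prod.lift (p.app A) (𝟙 A) ≫ c := by
  have hsp := hTr.superposing (E := A)
    (prod.lift prod.snd prod.fst : D.obj A ⨯ A ⟶ A ⨯ D.obj A)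
  rw [hTr.yanking] at hsp
  have e1 : (prod.lift
      (prod.lift prod.fst (prod.snd ≫ prod.fst) ≫ (prod.lift prod.snd prod.fst) ≫ prod.fst)
      (prod.lift (prod.lift prod.fst (prod.snd ≫ prod.fst) ≫ (prod.lift prod.snd prod.fst) ≫ prod.snd)
        ((prod.snd : D.obj A ⨯ (A ⨯ A) ⟶ A ⨯ A) ≫ prod.snd)))
      = prod.lift (prod.snd ≫ prod.fst) (prod.lift prod.fst (prod.snd ≫ prod.snd)) := by
    apply Limits.prod.hom_ext <;> simp
  rw [e1] at hsp
  have hlt := hTr.left_tightening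
    (prod.lift (prod.snd ≫ prod.fst) (prod.lift prod.fst (prod.snd ≫ prod.snd))
      : D.obj A ⨯ (A ⨯ A) ⟶ A ⨯ (D.obj A ⨯ A))
    (prod.lift (𝟙 A) (𝟙 A))
  rw [hsp] at hlt
  have e2 : prod.map (𝟙 (D.obj A)) (prod.lift (𝟙 A) (𝟙 A)) ≫
      prod.lift (prod.snd ≫ prod.fst) (prod.lift prod.fst (prod.snd ≫ prod.snd))
      = prod.lift prod.snd (𝟙 (D.obj A ⨯ A)) := by
    apply Limits.prod.hom_ext <;> simp
  rw [e2] at hlt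
  have e3 : prod.lift (𝟙 A) (𝟙 A) ≫ prod.map (p.app A) (𝟙 A) = prod.lift (p.app A) (𝟙 A) := by
    apply Limits.prod.hom_ext <;> simp
  rw [e3] at hlt
  have hrt := hTr.right_tightening (prod.lift prod.snd (𝟙 (D.obj A ⨯ A))) c
  have e4 : prod.lift prod.snd (𝟙 (D.obj A ⨯ A)) ≫ prod.map (𝟙 A) c = prod.lift prod.snd c := by
    apply Limits.prod.hom_ext <;> simp
  rw [e4, hlt] at hrt
  exact hrt

lemma trM (hTr : IsGuardedTrace D p @Tr) {X A B : C} (a : A ⟶ X) (b : D.obj X ⨯ A ⟶ B) :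
    Tr (prod.lift (prod.snd ≫ a) b) = prod.lift (a ≫ p.app X) (𝟙 A) ≫ b := by
  have hsl := hTr.sliding (prod.lift prod.snd b : D.obj X ⨯ A ⟶ A ⨯ B) a
  have e1 : prod.lift prod.snd b ≫ prod.map a (𝟙 B) = prod.lift (prod.snd ≫ a) b := by
    apply Limits.prod.hom_ext <;> simp
  have e2 : prod.map (D.map a) (𝟙 A) ≫ prod.lift prod.snd b
      = prod.lift prod.snd (prod.map (D.map a) (𝟙 A) ≫ b) := by
    apply Limits.prod.hom_ext <;> simp
  rw [e1, e2, trY hTr] at hsl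
  rw [hsl]
  have e3 : prod.lift (p.app A) (𝟙 A) ≫ prod.map (D.map a) (𝟙 A)
      = prod.lift (a ≫ p.app X) (𝟙 A) := by
    apply Limits.prod.hom_ext <;> simp
    exact (p.naturality a).symm
  rw [← Category.assoc, e3]

lemma trRec (hTr : IsGuardedTrace D p @Tr) {X A B : C} (f : D.obj X ⨯ A ⟶ X ⨯ B) :
    prod.lift (Tr (prod.lift (f ≫ prod.fst) (f ≫ prod.fst))) (𝟙 A) ≫
      prod.map (p.app X) (𝟙 A) ≫ f ≫ prod.snd = Tr f := by
  set u : D.obj X ⨯ A ⟶ X := f ≫ prod.fst with hu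
  set dg : A ⟶ X := Tr (prod.lift u u) with hdg
  set G : D.obj X ⨯ A ⟶ X ⨯ B :=
    prod.lift u (prod.lift (u ≫ p.app X) prod.snd ≫ f ≫ prod.snd) with hG
  -- Step 1 : LHS = Tr G
  have step1 : prod.lift dg (𝟙 A) ≫ prod.map (p.app X) (𝟙 A) ≫ f ≫ prod.snd = Tr G := by
    have hsp := hTr.superposing (E := A) (prod.lift u u)
    have e1 : (prod.lift
        (prod.lift prod.fst (prod.snd ≫ prod.fst) ≫ (prod.lift u u) ≫ prod.fst)
        (prod.lift (prod.lift prod.fst (prod.snd ≫ prod.fst) ≫ (prod.lift u u) ≫ prod.snd)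
          ((prod.snd : D.obj X ⨯ (A ⨯ A) ⟶ A ⨯ A) ≫ prod.snd)))
        = prod.lift (prod.lift prod.fst (prod.snd ≫ prod.fst) ≫ u)
            (prod.lift (prod.lift prod.fst (prod.snd ≫ prod.fst) ≫ u) (prod.snd ≫ prod.snd)) := by
      apply Limits.prod.hom_ext <;> simp
    rw [e1] at hsp
    have hlt := hTr.left_tightening
      (prod.lift (prod.lift prod.fst (prod.snd ≫ prod.fst) ≫ u)
        (prod.lift (prod.lift prod.fst (prod.snd ≫ prod.fst) ≫ u) (prod.snd ≫ prod.snd)))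
      (prod.lift (𝟙 A) (𝟙 A))
    rw [hsp] at hlt
    have eb : prod.map (𝟙 (D.obj X)) (prod.lift (𝟙 A) (𝟙 A)) ≫
        prod.lift prod.fst (prod.snd ≫ prod.fst) = 𝟙 _ := by
      apply Limits.prod.hom_ext <;> simp
    have e2 : prod.map (𝟙 (D.obj X)) (prod.lift (𝟙 A) (𝟙 A)) ≫
        prod.lift (prod.lift prod.fst (prod.snd ≫ prod.fst) ≫ u)
          (prod.lift (prod.lift prod.fst (prod.snd ≫ prod.fst) ≫ u) (prod.snd ≫ prod.snd))
        = prod.lift u (prod.lift u prod.snd) := by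
      apply Limits.prod.hom_ext <;> simp [reassoc_of% eb]
    rw [e2] at hlt
    have e3 : prod.lift (𝟙 A) (𝟙 A) ≫ prod.map dg (𝟙 A) = prod.lift dg (𝟙 A) := by
      apply Limits.prod.hom_ext <;> simp
    rw [e3] at hlt
    have hrt := hTr.right_tightening (prod.lift u (prod.lift u prod.snd))
      (prod.map (p.app X) (𝟙 A) ≫ f ≫ prod.snd)
    rw [hlt] at hrt
    have ec : prod.lift u prod.snd ≫ prod.map (p.app X) (𝟙 A)
        = prod.lift (u ≫ p.app X) prod.snd := by
      apply Limits.prod.hom_ext <;> simp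
    have e4 : prod.lift u (prod.lift u prod.snd) ≫
        prod.map (𝟙 X) (prod.map (p.app X) (𝟙 A) ≫ f ≫ prod.snd) = G := by
      apply Limits.prod.hom_ext <;> simp [hG, reassoc_of% ec]
    rw [e4] at hrt
    rw [← hrt]
  -- Step 2 : Tr g = G for the two-variable g, by Lemma M
  have step2 : Tr (prod.lift (prod.snd ≫ u)
      (prod.lift (prod.snd ≫ u) (prod.map (𝟙 (D.obj X)) prod.snd ≫ f ≫ prod.snd))) = G := by
    have hm := trM hTr u
      (prod.lift (prod.snd ≫ u) (prod.map (𝟙 (D.obj X)) prod.snd ≫ f ≫ prod.snd))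
    rw [hm, hG]
    have ed : prod.lift (u ≫ p.app X) (𝟙 (D.obj X ⨯ A)) ≫ prod.map (𝟙 (D.obj X)) prod.snd
        = prod.lift (u ≫ p.app X) prod.snd := by
      apply Limits.prod.hom_ext <;> simp
    apply Limits.prod.hom_ext <;> simp [reassoc_of% ed]
  -- Step 3 : vanishing₂ + sliding
  have hv2 := hTr.vanishing₂ (prod.lift (prod.snd ≫ u)
      (prod.lift (prod.snd ≫ u) (prod.map (𝟙 (D.obj X)) prod.snd ≫ f ≫ prod.snd)))
  rw [step2] at hv2
  set c2 : D.obj (X ⨯ X) ⨯ A ⟶ D.obj X ⨯ A :=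
    prod.lift (prod.fst ≫ D.map prod.snd) prod.snd with hc2
  set c1 : D.obj (X ⨯ X) ⨯ A ⟶ D.obj X ⨯ A :=
    prod.lift (prod.fst ≫ D.map prod.fst) prod.snd with hc1
  set h : D.obj (X ⨯ X) ⨯ A ⟶ X ⨯ B :=
    prod.lift (c2 ≫ u) (c1 ≫ f ≫ prod.snd) with hh
  have e6 : prod.lift (prod.fst ≫ D.map prod.fst)
        (prod.lift (prod.fst ≫ D.map prod.snd) prod.snd) ≫
        (prod.lift (prod.snd ≫ u)
          (prod.lift (prod.snd ≫ u) (prod.map (𝟙 (D.obj X)) prod.snd ≫ f ≫ prod.snd))) ≫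
        prod.lift (prod.lift prod.fst (prod.snd ≫ prod.fst)) (prod.snd ≫ prod.snd)
      = h ≫ prod.map (prod.lift (𝟙 X) (𝟙 X)) (𝟙 B) := by
    have q1 : prod.lift (prod.fst ≫ D.map prod.fst)
        (prod.lift (prod.fst ≫ D.map prod.snd) prod.snd) ≫ prod.snd = c2 := by simp [hc2]
    have q2 : prod.lift (prod.fst ≫ D.map prod.fst)
        (prod.lift (prod.fst ≫ D.map prod.snd) prod.snd) ≫
        prod.map (𝟙 (D.obj X)) prod.snd = c1 := by
      apply Limits.prod.hom_ext <;> simp [hc1]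
    apply Limits.prod.hom_ext
    · apply Limits.prod.hom_ext <;>
        simp [hh, reassoc_of% q1, reassoc_of% q2]
    · simp [hh, reassoc_of% q1, reassoc_of% q2]
  rw [e6] at hv2
  rw [hTr.sliding h (prod.lift (𝟙 X) (𝟙 X))] at hv2
  have eDf : D.map (prod.lift (𝟙 X) (𝟙 X)) ≫ D.map prod.fst = 𝟙 (D.obj X) := by
    rw [← D.map_comp, prod.lift_fst, D.map_id]
  have eDs : D.map (prod.lift (𝟙 X) (𝟙 X)) ≫ D.map prod.snd = 𝟙 (D.obj X) := by
    rw [← D.map_comp, prod.lift_snd, D.map_id]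
  have em2 : prod.map (D.map (prod.lift (𝟙 X) (𝟙 X))) (𝟙 A) ≫ c2 = 𝟙 _ := by
    apply Limits.prod.hom_ext <;> simp [hc2, eDs]
  have em1 : prod.map (D.map (prod.lift (𝟙 X) (𝟙 X))) (𝟙 A) ≫ c1 = 𝟙 _ := by
    apply Limits.prod.hom_ext <;> simp [hc1, eDf]
  have e7 : prod.map (D.map (prod.lift (𝟙 X) (𝟙 X))) (𝟙 A) ≫ h = f := by
    rw [hh, prod.comp_lift, reassoc_of% em1, reassoc_of% em2]
    apply Limits.prod.hom_ext <;> simp [hu]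
  rw [e7] at hv2
  rw [step1, hv2]


lemma trFix (hTr : IsGuardedTrace D p @Tr) {X Y : C} (f : D.obj X ⨯ Y ⟶ X) :
    Tr (prod.lift f f) =
      prod.lift (Tr (prod.lift f f)) (𝟙 Y) ≫ prod.map (p.app X) (𝟙 Y) ≫ f := by
  have h := trRec hTr (prod.lift f f)
  simp only [prod.lift_fst, prod.lift_snd] at h
  exact h.symm

lemma trParam (hTr : IsGuardedTrace D p @Tr) {X Y Z : C}
    (f : D.obj X ⨯ Y ⟶ X) (h : Z ⟶ Y) :
    Tr (prod.lift (prod.map (𝟙 (D.obj X)) h ≫ f) (prod.map (𝟙 (D.obj X)) h ≫ f))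
      = h ≫ Tr (prod.lift f f) := by
  rw [show prod.lift (prod.map (𝟙 (D.obj X)) h ≫ f) (prod.map (𝟙 (D.obj X)) h ≫ f)
      = prod.map (𝟙 (D.obj X)) h ≫ prod.lift f f from by simp,
    hTr.left_tightening]

lemma trComp (hTr : IsGuardedTrace D p @Tr) {X Y Z : C}
    (f : D.obj X ⨯ Y ⟶ Z) (g : Z ⟶ X) :
    Tr (prod.lift (f ≫ g) (f ≫ g)) =
      Tr (prod.lift (prod.map (D.map g) (𝟙 Y) ≫ f) (prod.map (D.map g) (𝟙 Y) ≫ f)) ≫ g := by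
  have e1 : prod.lift f (f ≫ g) ≫ prod.map g (𝟙 X) = prod.lift (f ≫ g) (f ≫ g) := by
    apply Limits.prod.hom_ext <;> simp
  have e2 : prod.map (D.map g) (𝟙 Y) ≫ prod.lift f (f ≫ g)
      = prod.lift (prod.map (D.map g) (𝟙 Y) ≫ f) (prod.map (D.map g) (𝟙 Y) ≫ f) ≫
        prod.map (𝟙 Z) g := by
    apply Limits.prod.hom_ext <;> simp
  rw [← e1, hTr.sliding, e2, hTr.right_tightening]

lemma trDdag (hTr : IsGuardedTrace D p @Tr) {X Y : C}
    (f : D.obj X ⨯ (D.obj X ⨯ Y) ⟶ X) :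
    Tr (prod.lift (Tr (prod.lift f f)) (Tr (prod.lift f f))) =
      Tr (prod.lift (prod.lift prod.fst (𝟙 (D.obj X ⨯ Y)) ≫ f)
        (prod.lift prod.fst (𝟙 (D.obj X ⨯ Y)) ≫ f)) := by
  have ha : Tr (prod.lift f (prod.lift f f)) =
      prod.lift (Tr (prod.lift f f)) (Tr (prod.lift f f)) := by
    have hrt := hTr.right_tightening (prod.lift f f) (prod.lift (𝟙 X) (𝟙 X))
    have e : prod.lift f f ≫ prod.map (𝟙 X) (prod.lift (𝟙 X) (𝟙 X))
        = prod.lift f (prod.lift f f) := by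
      apply Limits.prod.hom_ext <;> simp
    rw [e] at hrt
    rw [hrt]
    apply Limits.prod.hom_ext <;> simp
  rw [← ha]
  have hv2 := hTr.vanishing₂ (prod.lift f (prod.lift f f))
  rw [hv2]
  have eDf : D.map (prod.lift (𝟙 X) (𝟙 X)) ≫ D.map prod.fst = 𝟙 (D.obj X) := by
    rw [← D.map_comp, prod.lift_fst, D.map_id]
  have eDs : D.map (prod.lift (𝟙 X) (𝟙 X)) ≫ D.map prod.snd = 𝟙 (D.obj X) := by
    rw [← D.map_comp, prod.lift_snd, D.map_id]
  set can : D.obj (X ⨯ X) ⨯ Y ⟶ D.obj X ⨯ (D.obj X ⨯ Y) :=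
    prod.lift (prod.fst ≫ D.map prod.fst)
      (prod.lift (prod.fst ≫ D.map prod.snd) prod.snd) with hcan
  have e6 : can ≫ (prod.lift f (prod.lift f f)) ≫
        prod.lift (prod.lift prod.fst (prod.snd ≫ prod.fst)) (prod.snd ≫ prod.snd)
      = prod.lift (can ≫ f) (can ≫ f) ≫ prod.map (prod.lift (𝟙 X) (𝟙 X)) (𝟙 X) := by
    apply Limits.prod.hom_ext
    · apply Limits.prod.hom_ext <;> simp
    · simp
  rw [e6, hTr.sliding]
  have e8 : prod.map (D.map (prod.lift (𝟙 X) (𝟙 X))) (𝟙 Y) ≫ can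
      = prod.lift prod.fst (𝟙 (D.obj X ⨯ Y)) := by
    apply Limits.prod.hom_ext
    · simp [hcan, eDf]
    · apply Limits.prod.hom_ext <;> simp [hcan, eDs]
  have e9 : prod.map (D.map (prod.lift (𝟙 X) (𝟙 X))) (𝟙 Y) ≫
        prod.lift (can ≫ f) (can ≫ f)
      = prod.lift (prod.lift prod.fst (𝟙 (D.obj X ⨯ Y)) ≫ f)
          (prod.lift prod.fst (𝟙 (D.obj X ⨯ Y)) ≫ f) := by
    rw [prod.comp_lift, reassoc_of% e8]
  rw [e9]

end Aux

/-- **From guarded traces to guarded Conway operators.**  If `(C, ◇, Tr)` is a guarded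
traced category, then the operator `f† = Tr ⟨f, f⟩` makes `(C, ◇, †)` a guarded Conway
category, and moreover the trace is recovered from this dagger:
`π_r ∘ f ∘ (p_X × id_A) ∘ ⟨(π_ℓ ∘ f)†, id_A⟩ = Tr f`. -/
theorem guardedTrace_to_guardedConway
    {C : Type u} [Category.{v} C] [HasFiniteProducts C]
    (D : C ⥤ C) (p : 𝟭 C ⟶ D)
    (Tr : ∀ {X A B : C}, (D.obj X ⨯ A ⟶ X ⨯ B) → (A ⟶ B))
    (hTr : IsGuardedTrace D p @Tr) :
    IsGuardedConway D p (fun {X A} (f : D.obj X ⨯ A ⟶ X) => Tr (prod.lift f f)) ∧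
    ∀ (X A B : C) (f : D.obj X ⨯ A ⟶ X ⨯ B),
      prod.lift (Tr (prod.lift (f ≫ prod.fst) (f ≫ prod.fst))) (𝟙 A) ≫
          prod.map (p.app X) (𝟙 A) ≫ f ≫ prod.snd = Tr f := by
  refine ⟨⟨fun f => trFix hTr f, fun f h => trParam hTr f h,
    fun f g => trComp hTr f g, fun f => trDdag hTr f⟩,
    fun X A B f => trRec hTr f⟩
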